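/- Let n = 2k+1 be odd. Then 2^(n-1) · n! · x_1 x_2 ⋯ x_n = Σ_{I ⊆ [n], |I| ≤ k} (-1)^{|I|} (δ(I,1)x_1 + δ(I,2)x_2 + ⋯ + δ(I,n)x_n)^n, as a polynomial identity over ℂ. -/

import Mathlib

open MvPolynomial Finset

lemma fischer_inner {R : Type*} [CommRing R] (n : ℕ) (c : Fin n → ℕ) :
    ∑ I ∈ (univ : Finset (Fin n)).powerset,
      (-1 : R) ^ I.card * ∏ i, (if i ∈ I then (-1 : R) else 1) ^ (c i)
    = ∏ i, (1 - (-1 : R) ^ (c i)) := by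
  classical
  have h : ∀ i : Fin n, (1 - (-1:R)^(c i)) = ((-1) * (-1:R)^(c i) + 1) := by intro i; ring
  simp_rw [h]
  rw [Finset.prod_add]
  refine Finset.sum_congr rfl fun I hI => ?_
  rw [Finset.prod_mul_distrib, Finset.prod_const, Finset.prod_const_one, mul_one,
    ← Finset.prod_sdiff (Finset.mem_powerset.mp hI)]
  have h1 : ∏ i ∈ univ \ I, (if i ∈ I then (-1 : R) else 1) ^ (c i) = 1 := by
    apply Finset.prod_eq_one
    intro i hi
    rw [if_neg (Finset.mem_sdiff.mp hi).2, one_pow]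
  have h2 : ∏ i ∈ I, (if i ∈ I then (-1 : R) else 1) ^ (c i) = ∏ i ∈ I, (-1:R) ^ (c i) :=
    Finset.prod_congr rfl fun i hi => by rw [if_pos hi]
  rw [h1, h2, one_mul]

lemma fischer_full (n : ℕ) :
    ∑ I ∈ (Finset.univ : Finset (Fin n)).powerset,
        (-1 : MvPolynomial (Fin n) ℂ) ^ I.card *
          (∑ i, (if i ∈ I then (-1 : MvPolynomial (Fin n) ℂ) else 1) * X i) ^ n
      = ((2 ^ n * n.factorial : ℕ) : MvPolynomial (Fin n) ℂ) * ∏ i, X i := by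
  classical
  set R := MvPolynomial (Fin n) ℂ
  set c : (Fin n → Fin n) → Fin n → ℕ := fun p i => (univ.filter fun j => p j = i).card with hc
  -- expand powers and swap sums
  have step1 :
      ∑ I ∈ (Finset.univ : Finset (Fin n)).powerset,
        (-1 : R) ^ I.card * (∑ i, (if i ∈ I then (-1 : R) else 1) * X i) ^ n
      = ∑ p : Fin n → Fin n, (∏ i, (1 - (-1 : R) ^ (c p i))) * ∏ j, X (p j) := by
    simp_rw [Fintype.sum_pow (R := R), Finset.mul_sum (R := R)]
    rw [Finset.sum_comm]
    refine Finset.sum_congr rfl fun p _ => ?_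
    have hfib : ∀ I : Finset (Fin n),
        ∏ j, (if p j ∈ I then (-1 : R) else 1) = ∏ i, (if i ∈ I then (-1 : R) else 1) ^ (c p i) := by
      intro I
      rw [← Finset.prod_fiberwise' (univ : Finset (Fin n)) p (fun i => if i ∈ I then (-1:R) else 1)]
      exact Finset.prod_congr rfl fun i _ => Finset.prod_const _
    calc ∑ I ∈ (univ : Finset (Fin n)).powerset,
          (-1:R) ^ I.card * ∏ j, (if p j ∈ I then (-1 : R) else 1) * X (p j)
        = (∑ I ∈ (univ : Finset (Fin n)).powerset,
            (-1:R) ^ I.card * ∏ i, (if i ∈ I then (-1 : R) else 1) ^ (c p i)) * ∏ j, X (p j) := by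
          rw [Finset.sum_mul]
          refine Finset.sum_congr rfl fun I _ => ?_
          rw [Finset.prod_mul_distrib, hfib I, mul_assoc]
      _ = (∏ i, (1 - (-1 : R) ^ (c p i))) * ∏ j, X (p j) := by rw [fischer_inner]
  rw [step1]
  -- terms vanish unless p is bijective
  have hzero : ∀ p : Fin n → Fin n, ¬ Function.Bijective p →
      (∏ i, (1 - (-1 : R) ^ (c p i))) * ∏ j, X (p j) = 0 := by
    intro p hp
    have hsurj : ¬ Function.Surjective p := fun h => hp ((Finite.surjective_iff_bijective).mp h)
    rw [Function.Surjective] at hsurj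
    push_neg at hsurj
    obtain ⟨i, hi⟩ := hsurj
    have : c p i = 0 := by
      simp only [hc, Finset.card_eq_zero, Finset.filter_eq_empty_iff]
      intro j _
      exact hi j
    rw [Finset.prod_eq_zero (Finset.mem_univ i) (by rw [this, pow_zero, sub_self]), zero_mul]
  have hbij : ∀ p : Fin n → Fin n, Function.Bijective p →
      (∏ i, (1 - (-1 : R) ^ (c p i))) * ∏ j, X (p j) = (2:R) ^ n * ∏ i, X i := by
    intro p hp
    have h1 : ∀ i, c p i = 1 := by
      intro i
      rw [hc, Finset.card_eq_one]
      obtain ⟨j, hj⟩ := hp.surjective i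
      refine ⟨j, ?_⟩
      ext x
      simp only [Finset.mem_filter, Finset.mem_univ, true_and, Finset.mem_singleton, ← hj,
        hp.injective.eq_iff]
    have h2 : (∏ i : Fin n, (1 - (-1 : R) ^ (c p i))) = 2 ^ n := by
      simp [h1]; norm_num
    rw [h2, hp.prod_comp fun i => (X i : R)]
  -- restrict to bijections
  rw [← Finset.sum_subset (Finset.filter_subset (fun p : Fin n → Fin n => Function.Bijective p) univ)
    (fun p _ hp => hzero p (by simpa using hp))]
  rw [Finset.sum_congr rfl (fun p hp => hbij p (Finset.mem_filter.mp hp).2), Finset.sum_const]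
  have hcard : (univ.filter fun p : Fin n → Fin n => Function.Bijective p).card = n.factorial := by
    rw [← Fintype.card_subtype]
    have e : Equiv.Perm (Fin n) ≃ {p : Fin n → Fin n // Function.Bijective p} :=
      { toFun := fun σ => ⟨σ, σ.bijective⟩
        invFun := fun p => Equiv.ofBijective _ p.2
        left_inv := fun σ => Equiv.ext fun x => rfl
        right_inv := fun p => rfl }
    rw [← Fintype.card_congr e, Fintype.card_perm, Fintype.card_fin]
  rw [hcard, nsmul_eq_mul]
  push_cast
  ring

/-- Symmetric form of Fischer's decomposition for odd `n = 2k+1`: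
`2^(n-1) n! x_1⋯x_n = ∑_{I ⊆ [n], |I| ≤ k} (-1)^{|I|} (δ(I,1)x_1 + ⋯ + δ(I,n)x_n)^n`. -/
theorem fischer_symmetric_odd (n k : ℕ) (hn : n = 2 * k + 1) :
    ((2 ^ (n - 1) * n.factorial : ℕ) : MvPolynomial (Fin n) ℂ) * ∏ i, X i =
      ∑ I ∈ (Finset.univ : Finset (Fin n)).powerset.filter (fun I => I.card ≤ k),
        (-1 : MvPolynomial (Fin n) ℂ) ^ I.card *
          (∑ i, (if i ∈ I then (-1 : MvPolynomial (Fin n) ℂ) else 1) * X i) ^ n := by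
  classical
  set R := MvPolynomial (Fin n) ℂ
  have hodd : Odd n := ⟨k, by omega⟩
  set t : Finset (Fin n) → R := fun I =>
    (-1 : R) ^ I.card * (∑ i, (if i ∈ I then (-1 : R) else 1) * X i) ^ n with ht
  -- term equality under complement
  have hcompl : ∀ I : Finset (Fin n), t Iᶜ = t I := by
    intro I
    have hcard : I.card ≤ n := by simpa using Finset.card_le_univ I
    have hsum : (∑ i, (if i ∈ Iᶜ then (-1 : R) else 1) * X i)
        = -(∑ i, (if i ∈ I then (-1 : R) else 1) * X i) := by
      rw [← Finset.sum_neg_distrib]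
      refine Finset.sum_congr rfl fun i _ => ?_
      by_cases h : i ∈ I <;> simp [h] <;> ring
    have hc2 : (Iᶜ).card = n - I.card := by
      rw [Finset.card_compl, Fintype.card_fin]
    have hpow : ((-1 : R)) ^ (n - I.card) = -(-1 : R) ^ I.card := by
      have H1 : ((-1:R)) ^ (n - I.card) * (-1:R) ^ I.card = -1 := by
        rw [← pow_add, Nat.sub_add_cancel hcard, hodd.neg_one_pow]
      have H2 : ((-1:R)) ^ I.card * (-1:R) ^ I.card = 1 := by
        rw [← pow_add, Even.neg_one_pow ⟨I.card, rfl⟩]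
      linear_combination ((-1:R) ^ I.card) * H1 - ((-1:R) ^ (n - I.card)) * H2
    rw [ht]
    simp only [hsum, hc2, hpow, hodd.neg_pow]
    ring
  -- split the full sum
  have hsplit :
      ∑ I ∈ (Finset.univ : Finset (Fin n)).powerset, t I
      = 2 * ∑ I ∈ (Finset.univ : Finset (Fin n)).powerset.filter (fun I => I.card ≤ k), t I := by
    rw [← Finset.sum_filter_add_sum_filter_not (univ : Finset (Fin n)).powerset
      (fun I => I.card ≤ k), two_mul]
    congr 1
    refine Finset.sum_nbij' (fun I => Iᶜ) (fun I => Iᶜ) ?_ ?_ ?_ ?_ ?_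
    · intro I hI
      simp only [Finset.mem_filter, Finset.mem_powerset] at hI ⊢
      have hcard : I.card ≤ n := by simpa using Finset.card_le_univ I
      refine ⟨Finset.subset_univ _, ?_⟩
      rw [Finset.card_compl, Fintype.card_fin]
      omega
    · intro I hI
      simp only [Finset.mem_filter, Finset.mem_powerset] at hI ⊢
      have hcard : I.card ≤ n := by simpa using Finset.card_le_univ I
      refine ⟨Finset.subset_univ _, ?_⟩
      rw [Finset.card_compl, Fintype.card_fin]
      omega
    · intro I _; exact compl_compl I
    · intro I _; exact compl_compl I
    · intro I _; exact (hcompl I).symm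
  have hfull := fischer_full n
  have h2 : ((2 ^ n * n.factorial : ℕ) : R) = 2 * (((2 ^ (n - 1) * n.factorial : ℕ) : R)) := by
    have : 2 ^ n = 2 * 2 ^ (n - 1) := by
      rw [← pow_succ']
      congr 1
      omega
    push_cast [this]
    ring
  have key : (2 : R) * (((2 ^ (n - 1) * n.factorial : ℕ) : R) * ∏ i, X i)
      = 2 * ∑ I ∈ (Finset.univ : Finset (Fin n)).powerset.filter (fun I => I.card ≤ k), t I := by
    rw [← hsplit, ht]
    rw [hfull, h2]
    ring
  exact mul_left_cancel₀ (two_ne_zero) key
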